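/- Let B₁,…,B_m, Y₀, Y be finite random variables with B₁,…,B_m i.i.d.-style mutually independent and independent of Y₀. Suppose I₁,…,I_t are subsets of [m] such that every element of [m] lies in exactly s of the sets. Then ∑_{j=1}^t I(B_{I_j}; Y | Y₀) ≤ s · I(B_{[m]}; Y | Y₀). -/

import Mathlib

open scoped Classical in
/-- Probability that the random variable `X` takes value `s`, under the (finite) probability
mass function `p` on the sample space `Ω`. -/
noncomputable def pmfOf {Ω S : Type*} [Fintype Ω] (p : Ω → ℝ) (X : Ω → S) (s : S) : ℝ :=
  ∑ ω : Ω, if X ω = s then p ω else 0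

/-- Shannon entropy (in nats) of the random variable `X` under `p`. -/
noncomputable def Hent {Ω S : Type*} [Fintype Ω] [Fintype S] (p : Ω → ℝ) (X : Ω → S) : ℝ :=
  -∑ s : S, pmfOf p X s * Real.log (pmfOf p X s)

/-- Conditional entropy `H(X | Z)`. -/
noncomputable def condH {Ω S U : Type*} [Fintype Ω] [Fintype S] [Fintype U]
    (p : Ω → ℝ) (X : Ω → S) (Z : Ω → U) : ℝ :=
  Hent p (fun ω => (X ω, Z ω)) - Hent p Z

/-- Mutual information `I(X ; Y)`. -/
noncomputable def MI {Ω S T : Type*} [Fintype Ω] [Fintype S] [Fintype T]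
    (p : Ω → ℝ) (X : Ω → S) (Y : Ω → T) : ℝ :=
  Hent p X + Hent p Y - Hent p (fun ω => (X ω, Y ω))

/-- Conditional mutual information `I(X ; Y | Z)`. -/
noncomputable def CMI {Ω S T U : Type*} [Fintype Ω] [Fintype S] [Fintype T] [Fintype U]
    (p : Ω → ℝ) (X : Ω → S) (Y : Ω → T) (Z : Ω → U) : ℝ :=
  Hent p (fun ω => (X ω, Z ω)) + Hent p (fun ω => (Y ω, Z ω))
    - Hent p (fun ω => (X ω, Y ω, Z ω)) - Hent p Z


open scoped Classical

section aux
variable {Ω S S' : Type*} [Fintype Ω] {p : Ω → ℝ}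

lemma pmfOf_nonneg (hp0 : ∀ ω, 0 ≤ p ω) (X : Ω → S) (s : S) : 0 ≤ pmfOf p X s := by
  refine Finset.sum_nonneg fun ω _ => ?_
  split <;> simp [hp0]

lemma sum_pmfOf [Fintype S] (hp1 : ∑ ω, p ω = 1) (X : Ω → S) : ∑ s : S, pmfOf p X s = 1 := by
  unfold pmfOf
  rw [Finset.sum_comm, ← hp1]
  exact Finset.sum_congr rfl fun ω _ => by simp

lemma pmfOf_comp [Fintype S] (X : Ω → S) (f : S → S') (v : S') :
    pmfOf p (fun ω => f (X ω)) v = ∑ s : S, if f s = v then pmfOf p X s else 0 := by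
  unfold pmfOf
  have step : ∀ s : S, (if f s = v then ∑ ω : Ω, if X ω = s then p ω else 0 else 0)
      = ∑ ω : Ω, if X ω = s then (if f s = v then p ω else 0) else 0 := by
    intro s
    by_cases h : f s = v <;> simp [h]
  rw [Finset.sum_congr rfl fun s _ => step s, Finset.sum_comm]
  refine Finset.sum_congr rfl fun ω _ => ?_
  rw [Finset.sum_ite_eq]
  simp

lemma Hent_eq_sum_omega [Fintype S] (X : Ω → S) :
    Hent p X = -∑ ω, p ω * Real.log (pmfOf p X (X ω)) := by
  unfold Hent
  congr 1
  have step : ∀ s : S, pmfOf p X s * Real.log (pmfOf p X s)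
      = ∑ ω, (if X ω = s then p ω * Real.log (pmfOf p X s) else 0) := by
    intro s
    have hdef : pmfOf p X s = ∑ ω : Ω, if X ω = s then p ω else 0 := rfl
    calc pmfOf p X s * Real.log (pmfOf p X s)
        = (∑ ω : Ω, if X ω = s then p ω else 0) * Real.log (pmfOf p X s) := by rw [← hdef]
      _ = ∑ ω, (if X ω = s then p ω else 0) * Real.log (pmfOf p X s) := Finset.sum_mul _ _ _
      _ = ∑ ω, (if X ω = s then p ω * Real.log (pmfOf p X s) else 0) :=
          Finset.sum_congr rfl fun ω _ => by split <;> simp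
  rw [Finset.sum_congr rfl fun s _ => step s, Finset.sum_comm]
  refine Finset.sum_congr rfl fun ω _ => ?_
  rw [Finset.sum_ite_eq]
  simp

lemma Hent_congr [Fintype S] [Fintype S'] {X : Ω → S} {X' : Ω → S'}
    (h : ∀ ω ω', X ω = X ω' ↔ X' ω = X' ω') : Hent p X = Hent p X' := by
  rw [Hent_eq_sum_omega, Hent_eq_sum_omega]
  congr 1
  refine Finset.sum_congr rfl fun ω _ => ?_
  have : pmfOf p X (X ω) = pmfOf p X' (X' ω) := by
    refine Finset.sum_congr rfl fun ω' _ => ?_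
    simp [h ω' ω]
  rw [this]

/-- Gibbs' inequality in a convenient form. -/
lemma gibbs {V : Type*} [Fintype V] (r q : V → ℝ) (hr0 : ∀ v, 0 ≤ r v)
    (hq0 : ∀ v, 0 ≤ q v) (hr1 : ∑ v, r v = 1) (hq1 : ∑ v, q v ≤ 1)
    (hac : ∀ v, r v ≠ 0 → q v ≠ 0) :
    0 ≤ ∑ v, r v * (Real.log (r v) - Real.log (q v)) := by
  classical
  have key : ∀ v, r v ≠ 0 → r v - q v ≤ r v * (Real.log (r v) - Real.log (q v)) := by
    intro v h
    have hrpos : 0 < r v := lt_of_le_of_ne (hr0 v) (Ne.symm h)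
    have hqpos : 0 < q v := lt_of_le_of_ne (hq0 v) (Ne.symm (hac v h))
    have h4 := Real.log_le_sub_one_of_pos (x := q v / r v) (by positivity)
    rw [Real.log_div (ne_of_gt hqpos) (ne_of_gt hrpos)] at h4
    have h5 : r v * (Real.log (q v) - Real.log (r v)) ≤ r v * (q v / r v - 1) :=
      mul_le_mul_of_nonneg_left h4 (le_of_lt hrpos)
    have h6 : r v * (q v / r v - 1) = q v - r v := by field_simp
    rw [h6, mul_sub] at h5
    rw [mul_sub]
    linarith
  have h1 : ∑ v ∈ Finset.univ.filter (fun v => r v ≠ 0), r v = 1 := by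
    rw [← hr1]
    exact Finset.sum_filter_ne_zero _
  have h2 : ∑ v ∈ Finset.univ.filter (fun v => r v ≠ 0), q v ≤ 1 := by
    refine le_trans ?_ hq1
    exact Finset.sum_le_sum_of_subset_of_nonneg (Finset.filter_subset _ _) (fun v _ _ => hq0 v)
  have h3 : ∑ v, r v * (Real.log (r v) - Real.log (q v))
      = ∑ v ∈ Finset.univ.filter (fun v => r v ≠ 0), r v * (Real.log (r v) - Real.log (q v)) := by
    symm
    refine Finset.sum_filter_of_ne fun v _ h => ?_
    intro hr; exact h (by rw [hr, zero_mul])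
  rw [h3]
  have h4 : ∑ v ∈ Finset.univ.filter (fun v => r v ≠ 0), (r v - q v)
      ≤ ∑ v ∈ Finset.univ.filter (fun v => r v ≠ 0), r v * (Real.log (r v) - Real.log (q v)) := by
    refine Finset.sum_le_sum fun v hv => ?_
    simp only [Finset.mem_filter] at hv
    exact key v hv.2
  rw [Finset.sum_sub_distrib, h1] at h4
  linarith


lemma Hent_comp_eq {V V' : Type*} [Fintype V] [Fintype V'] (W : Ω → V) (f : V → V') :
    Hent p (fun ω => f (W ω))
      = -∑ v : V, pmfOf p W v * Real.log (pmfOf p (fun ω => f (W ω)) (f v)) := by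
  unfold Hent
  congr 1
  have step : ∀ v' : V', pmfOf p (fun ω => f (W ω)) v' * Real.log (pmfOf p (fun ω => f (W ω)) v')
      = ∑ v : V, (if f v = v' then pmfOf p W v * Real.log (pmfOf p (fun ω => f (W ω)) v') else 0) := by
    intro v'
    rw [pmfOf_comp W f v', Finset.sum_mul]
    exact Finset.sum_congr rfl fun v _ => by split <;> simp
  rw [Finset.sum_congr rfl fun v' _ => step v', Finset.sum_comm]
  refine Finset.sum_congr rfl fun v _ => ?_
  rw [Finset.sum_ite_eq]
  simp


section submodsec
variable {T U : Type*} [Fintype S] [Fintype T] [Fintype U]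

lemma submod (hp0 : ∀ ω, 0 ≤ p ω) (hp1 : ∑ ω, p ω = 1)
    (X : Ω → S) (Y : Ω → T) (Z : Ω → U) :
    Hent p (fun ω => (X ω, Y ω, Z ω)) + Hent p Z
      ≤ Hent p (fun ω => (X ω, Z ω)) + Hent p (fun ω => (Y ω, Z ω)) := by
  set W : Ω → S × T × U := fun ω => (X ω, Y ω, Z ω) with hW
  set r : S × T × U → ℝ := pmfOf p W with hr
  set a : S × U → ℝ := pmfOf p (fun ω => (X ω, Z ω)) with ha
  set b : T × U → ℝ := pmfOf p (fun ω => (Y ω, Z ω)) with hb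
  set c : U → ℝ := pmfOf p Z with hc
  -- marginals
  have ma : ∀ x z, a (x, z) = ∑ y, r (x, y, z) := by
    intro x z
    have : a (x, z) = pmfOf p (fun ω => ((W ω).1, (W ω).2.2)) (x, z) := rfl
    rw [this, pmfOf_comp W (fun v => (v.1, v.2.2)) (x, z)]
    simp [Fintype.sum_prod_type, Prod.mk.injEq, ite_and, ← hr]
  have mb : ∀ y z, b (y, z) = ∑ x, r (x, y, z) := by
    intro y z
    have : b (y, z) = pmfOf p (fun ω => ((W ω).2.1, (W ω).2.2)) (y, z) := rfl
    rw [this, pmfOf_comp W (fun v => (v.2.1, v.2.2)) (y, z)]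
    simp [Fintype.sum_prod_type, Prod.mk.injEq, ite_and, ← hr, Finset.sum_comm (γ := T)]
  have mc : ∀ z, c z = ∑ x, ∑ y, r (x, y, z) := by
    intro z
    have : c z = pmfOf p (fun ω => (W ω).2.2) z := rfl
    rw [this, pmfOf_comp W (fun v => v.2.2) z]
    simp [Fintype.sum_prod_type, ← hr]
  have hr0 : ∀ v, 0 ≤ r v := pmfOf_nonneg hp0 W
  have ha0 : ∀ w, 0 ≤ a w := pmfOf_nonneg hp0 _
  have hb0 : ∀ w, 0 ≤ b w := pmfOf_nonneg hp0 _
  have hc0 : ∀ w, 0 ≤ c w := pmfOf_nonneg hp0 _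
  have hr1 : ∑ v, r v = 1 := sum_pmfOf hp1 W
  have hc1 : ∑ z, c z = 1 := sum_pmfOf hp1 Z
  set q : S × T × U → ℝ := fun v =>
    if c v.2.2 = 0 then 0 else a (v.1, v.2.2) * b (v.2.1, v.2.2) / c v.2.2 with hq
  have hq0 : ∀ v, 0 ≤ q v := by
    intro v
    simp only [hq]
    split
    · exact le_refl 0
    · exact div_nonneg (mul_nonneg (ha0 _) (hb0 _)) (hc0 _)
  have hsum_a : ∀ z, ∑ x, a (x, z) = c z := by
    intro z
    rw [mc z]
    exact Finset.sum_congr rfl fun x _ => ma x z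
  have hsum_b : ∀ z, ∑ y, b (y, z) = c z := by
    intro z
    rw [mc z, Finset.sum_comm]
    exact Finset.sum_congr rfl fun y _ => mb y z
  have hq1 : ∑ v, q v ≤ 1 := by
    have reorder : ∑ v : S × T × U, q v = ∑ z, ∑ x, ∑ y, q (x, y, z) := by
      calc ∑ v : S × T × U, q v = ∑ x, ∑ y, ∑ z, q (x, y, z) := by
            simp [Fintype.sum_prod_type]
        _ = ∑ x, ∑ z, ∑ y, q (x, y, z) := Finset.sum_congr rfl fun x _ => Finset.sum_comm
        _ = ∑ z, ∑ x, ∑ y, q (x, y, z) := Finset.sum_comm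
    rw [reorder, ← hc1]
    refine Finset.sum_le_sum fun z _ => ?_
    by_cases h : c z = 0
    · simp [hq, h, hc0 z]
    · have : ∑ x, ∑ y, q (x, y, z) = (∑ x, a (x, z)) * (∑ y, b (y, z)) / c z := by
        simp only [hq, if_neg h]
        rw [Finset.sum_mul_sum]
        simp only [← Finset.sum_div]
      rw [this, hsum_a, hsum_b, mul_div_assoc, div_self h, mul_one]
  have hac : ∀ v, r v ≠ 0 → q v ≠ 0 := by
    rintro ⟨x, y, z⟩ hrv
    have hrpos : 0 < r (x, y, z) := (hr0 _).lt_of_ne (Ne.symm hrv)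
    have hapos : 0 < a (x, z) := by
      rw [ma]
      exact hrpos.trans_le (Finset.single_le_sum (f := fun y => r (x, y, z))
        (fun i _ => hr0 _) (Finset.mem_univ y))
    have hbpos : 0 < b (y, z) := by
      rw [mb]
      exact hrpos.trans_le (Finset.single_le_sum (f := fun x => r (x, y, z))
        (fun i _ => hr0 _) (Finset.mem_univ x))
    have hcpos : 0 < c z := by
      rw [mc]
      refine lt_of_lt_of_le hapos ?_
      rw [ma]
      exact Finset.single_le_sum (f := fun x => ∑ y, r (x, y, z))
        (fun i _ => Finset.sum_nonneg fun _ _ => hr0 _) (Finset.mem_univ x)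
    simp only [hq]
    rw [if_neg (ne_of_gt hcpos)]
    exact ne_of_gt (div_pos (mul_pos hapos hbpos) hcpos)
  have G := gibbs r q hr0 hq0 hr1 hq1 hac
  have E : ∑ v, r v * (Real.log (r v) - Real.log (q v))
      = ∑ v : S × T × U, (r v * Real.log (r v) + r v * Real.log (c v.2.2)
        - r v * Real.log (a (v.1, v.2.2)) - r v * Real.log (b (v.2.1, v.2.2))) := by
    refine Finset.sum_congr rfl fun v _ => ?_
    by_cases hrv : r v = 0
    · simp [hrv]
    · obtain ⟨x, y, z⟩ := v
      have hrpos : 0 < r (x, y, z) := (hr0 _).lt_of_ne (Ne.symm hrv)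
      have hapos : 0 < a (x, z) := by
        rw [ma]
        exact hrpos.trans_le (Finset.single_le_sum (f := fun y => r (x, y, z))
          (fun i _ => hr0 _) (Finset.mem_univ y))
      have hbpos : 0 < b (y, z) := by
        rw [mb]
        exact hrpos.trans_le (Finset.single_le_sum (f := fun x => r (x, y, z))
          (fun i _ => hr0 _) (Finset.mem_univ x))
      have hcpos : 0 < c z := by
        rw [mc]
        refine lt_of_lt_of_le hapos ?_
        rw [ma]
        exact Finset.single_le_sum (f := fun x => ∑ y, r (x, y, z))
          (fun i _ => Finset.sum_nonneg fun _ _ => hr0 _) (Finset.mem_univ x)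
      have hlq : Real.log (q (x, y, z))
          = Real.log (a (x, z)) + Real.log (b (y, z)) - Real.log (c z) := by
        simp only [hq]
        rw [if_neg (ne_of_gt hcpos), Real.log_div (ne_of_gt (mul_pos hapos hbpos)) (ne_of_gt hcpos),
          Real.log_mul (ne_of_gt hapos) (ne_of_gt hbpos)]
      rw [hlq]
      ring
  rw [E] at G
  have split : ∑ v : S × T × U, (r v * Real.log (r v) + r v * Real.log (c v.2.2)
        - r v * Real.log (a (v.1, v.2.2)) - r v * Real.log (b (v.2.1, v.2.2)))
      = (∑ v : S × T × U, r v * Real.log (r v)) + (∑ v : S × T × U, r v * Real.log (c v.2.2))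
        - (∑ v : S × T × U, r v * Real.log (a (v.1, v.2.2)))
        - (∑ v : S × T × U, r v * Real.log (b (v.2.1, v.2.2))) := by
    rw [Finset.sum_sub_distrib, Finset.sum_sub_distrib, Finset.sum_add_distrib]
  rw [split] at G
  have HT : Hent p W = -∑ v : S × T × U, r v * Real.log (r v) := rfl
  have HXZ : Hent p (fun ω => (X ω, Z ω))
      = -∑ v : S × T × U, r v * Real.log (a (v.1, v.2.2)) :=
    Hent_comp_eq W (fun v => (v.1, v.2.2))
  have HYZ : Hent p (fun ω => (Y ω, Z ω))
      = -∑ v : S × T × U, r v * Real.log (b (v.2.1, v.2.2)) :=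
    Hent_comp_eq W (fun v => (v.2.1, v.2.2))
  have HZ : Hent p Z = -∑ v : S × T × U, r v * Real.log (c v.2.2) :=
    Hent_comp_eq W (fun v => v.2.2)
  rw [HT, HXZ, HYZ, HZ]
  linarith

end submodsec

lemma Hent_eq_negMulLog {Ω S : Type*} [Fintype Ω] [Fintype S] (p : Ω → ℝ) (X : Ω → S) :
    Hent p X = ∑ s : S, Real.negMulLog (pmfOf p X s) := by
  unfold Hent
  rw [← Finset.sum_neg_distrib]
  exact Finset.sum_congr rfl fun s _ => by rw [Real.negMulLog]; ring

lemma negMulLog_prod {ι : Type*} (s : Finset ι) (x : ι → ℝ) :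
    Real.negMulLog (∏ i ∈ s, x i)
      = ∑ j ∈ s, (∏ i ∈ s.erase j, x i) * Real.negMulLog (x j) := by
  classical
  induction s using Finset.induction_on with
  | empty => simp
  | insert a s ha ih =>
    rw [Finset.prod_insert ha, Real.negMulLog_mul, ih, Finset.sum_insert ha,
      Finset.erase_insert ha, Finset.mul_sum]
    congr 1
    refine Finset.sum_congr rfl fun j hj => ?_
    rw [Finset.erase_insert_of_ne (show a ≠ j from fun h => ha (h ▸ hj)),
      Finset.prod_insert (fun h => ha (Finset.mem_of_mem_erase h))]
    ring

lemma sum_pi_prod {ι α : Type*} [Fintype ι] [Fintype α] (F : ι → α → ℝ) :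
    ∑ b : ι → α, ∏ i, F i (b i) = ∏ i, ∑ v, F i v := by
  classical
  rw [Finset.prod_univ_sum]
  rw [← Fintype.piFinset_univ]

lemma sum_negMulLog_prod {ι α : Type*} [Fintype ι] [Fintype α] (q : ι → α → ℝ)
    (h1 : ∀ i, ∑ v, q i v = 1) :
    ∑ b : ι → α, Real.negMulLog (∏ i, q i (b i))
      = ∑ i, ∑ v, Real.negMulLog (q i v) := by
  classical
  rw [Finset.sum_congr rfl fun b _ => negMulLog_prod Finset.univ (fun i => q i (b i))]
  rw [Finset.sum_comm]
  refine Finset.sum_congr rfl fun j _ => ?_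
  have step : ∀ b : ι → α, (∏ i ∈ Finset.univ.erase j, q i (b i)) * Real.negMulLog (q j (b j))
      = ∏ i, (if i = j then Real.negMulLog (q i (b i)) else q i (b i)) := by
    intro b
    rw [← Finset.prod_erase_mul Finset.univ _ (Finset.mem_univ j)]
    simp only [if_pos rfl]
    congr 1
    exact Finset.prod_congr rfl fun i hi => by
      rw [if_neg (Finset.ne_of_mem_erase hi)]
  rw [Finset.sum_congr rfl fun b _ => step b]
  rw [sum_pi_prod (F := fun i v => if i = j then Real.negMulLog (q i v) else q i v)]
  rw [Finset.prod_eq_single j (fun i _ hij => by simp only [if_neg hij]; exact h1 i)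
    (fun h => absurd (Finset.mem_univ j) h)]
  simp


section indepaux
variable {M BT : Type*} [Fintype M] [Fintype BT] {m : ℕ}
  {Y0 : Ω → M} {B : Ω → Fin m → BT}

/-- Restriction of the independence hypothesis to a subset of coordinates. -/
lemma pmfOf_restrict (hp1 : ∑ ω, p ω = 1)
    (hind : ∀ (y : M) (b : Fin m → BT),
      pmfOf p (fun ω => (Y0 ω, B ω)) (y, b)
        = pmfOf p Y0 y * ∏ i : Fin m, pmfOf p (fun ω => B ω i) (b i))
    (J : Finset (Fin m)) (y : M) (b : ↥J → BT) :
    pmfOf p (fun ω => (Y0 ω, fun i : ↥J => B ω i)) (y, b)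
      = pmfOf p Y0 y * ∏ i : ↥J, pmfOf p (fun ω => B ω i) (b i) := by
  set q : Fin m → BT → ℝ := fun i v => pmfOf p (fun ω => B ω i) v with hqdef
  have key := pmfOf_comp (p := p) (fun ω => (Y0 ω, B ω))
    (fun yc => (yc.1, fun i : ↥J => yc.2 i)) (y, b)
  have key' : pmfOf p (fun ω => (Y0 ω, fun i : ↥J => B ω i)) (y, b) = _ := key
  rw [key', Fintype.sum_prod_type]
  simp only [Prod.mk.injEq, ite_and]
  rw [Finset.sum_comm]
  rw [Finset.sum_congr rfl fun c _ => Finset.sum_ite_eq' Finset.univ y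
    (fun y' => if (fun i : ↥J => c i) = b
      then pmfOf p (fun ω => (Y0 ω, B ω)) (y', c) else 0)]
  simp only [Finset.mem_univ, if_true]
  simp only [hind]
  rw [Finset.sum_congr rfl fun c _ =>
    (by split <;> simp : (if (fun i : ↥J => c i) = b
        then pmfOf p Y0 y * ∏ i : Fin m, q i (c i) else 0)
      = pmfOf p Y0 y * (if (fun i : ↥J => c i) = b then ∏ i : Fin m, q i (c i) else 0))]
  rw [← Finset.mul_sum]
  congr 1
  -- key2 : the sum over extensions
  have hq1 : ∀ i, ∑ v, q i v = 1 := fun i => sum_pmfOf hp1 _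
  set e := (Equiv.piEquivPiSubtypeProd (fun i : Fin m => i ∈ J) (fun _ => BT)).symm with he
  rw [← Equiv.sum_comp e
    (fun c => if (fun i : ↥J => c i) = b then ∏ i : Fin m, q i (c i) else 0)]
  rw [Fintype.sum_prod_type]
  have he1 : ∀ (b' : ↥J → BT) (c' : {x : Fin m // ¬ x ∈ J} → BT),
      (fun i : ↥J => e (b', c') i) = b' := by
    intro b' c'
    funext i
    simp [he, Equiv.piEquivPiSubtypeProd, i.2]
  have he2 : ∀ (b' : ↥J → BT) (c' : {x : Fin m // ¬ x ∈ J} → BT),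
      ∏ i : Fin m, q i (e (b', c') i)
        = (∏ i : ↥J, q i (b' i)) * ∏ i : {x : Fin m // ¬ x ∈ J}, q i (c' i) := by
    intro b' c'
    rw [← Fintype.prod_subtype_mul_prod_subtype (fun i : Fin m => i ∈ J)
      (fun i => q i (e (b', c') i))]
    congr 1
    · refine Finset.prod_congr (by congr!) fun i _ => by
        simp [he, Equiv.piEquivPiSubtypeProd, i.2]
    · refine Finset.prod_congr (by congr!) fun i _ => by
        simp [he, Equiv.piEquivPiSubtypeProd, i.2]
  rw [Finset.sum_congr rfl fun b' _ => Finset.sum_congr rfl fun c' _ =>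
    (by rw [he1 b' c', he2 b' c'] :
      (if (fun i : ↥J => e (b', c') i) = b then ∏ i : Fin m, q i (e (b', c') i) else 0)
      = if b' = b then (∏ i : ↥J, q i (b' i)) * ∏ i : {x : Fin m // ¬ x ∈ J}, q i (c' i) else 0)]
  rw [Finset.sum_congr rfl fun b' _ => (by split <;> simp [Finset.mul_sum] :
      (∑ c' : {x : Fin m // ¬ x ∈ J} → BT, if b' = b
        then (∏ i : ↥J, q i (b' i)) * ∏ i : {x : Fin m // ¬ x ∈ J}, q i (c' i) else 0)
      = if b' = b then (∏ i : ↥J, q i (b' i))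
          * ∑ c' : {x : Fin m // ¬ x ∈ J} → BT, ∏ i : {x : Fin m // ¬ x ∈ J}, q i (c' i)
        else 0)]
  rw [Finset.sum_ite_eq' Finset.univ b
    (fun b' => (∏ i : ↥J, q i (b' i))
      * ∑ c' : {x : Fin m // ¬ x ∈ J} → BT, ∏ i : {x : Fin m // ¬ x ∈ J}, q i (c' i))]
  simp only [Finset.mem_univ, if_true]
  calc (∏ i : ↥J, q i (b i))
        * ∑ c' : {x : Fin m // ¬ x ∈ J} → BT, ∏ i : {x : Fin m // ¬ x ∈ J}, q i (c' i)
      = (∏ i : ↥J, q i (b i)) * 1 := by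
        congr 1
        refine Eq.trans (Finset.sum_congr (by congr!) fun _ _ => rfl)
          (Eq.trans (sum_pi_prod (F := fun (i : {x : Fin m // ¬ x ∈ J}) v => q i v)) ?_)
        simp [hq1]
    _ = ∏ i : ↥J, pmfOf p (fun ω => B ω i) (b i) := by
        rw [mul_one]

lemma Hent_indep (hp1 : ∑ ω, p ω = 1)
    (hind : ∀ (y : M) (b : Fin m → BT),
      pmfOf p (fun ω => (Y0 ω, B ω)) (y, b)
        = pmfOf p Y0 y * ∏ i : Fin m, pmfOf p (fun ω => B ω i) (b i))
    (J : Finset (Fin m)) :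
    Hent p (fun ω => (Y0 ω, fun i : ↥J => B ω i))
      = Hent p Y0 + ∑ i : ↥J, Hent p (fun ω => B ω i.1) := by
  have hq1 : ∀ i : Fin m, ∑ v, pmfOf p (fun ω => B ω i) v = 1 := fun i => sum_pmfOf hp1 _
  have hq0sum : ∑ y, pmfOf p Y0 y = 1 := sum_pmfOf hp1 _
  have hPsum : ∑ b : ↥J → BT, ∏ i : ↥J, pmfOf p (fun ω => B ω i.1) (b i) = 1 := by
    refine Eq.trans (Finset.sum_congr (by congr!) fun _ _ => rfl)
      (Eq.trans (sum_pi_prod (F := fun (i : ↥J) v => pmfOf p (fun ω => B ω i.1) v)) ?_)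
    simp [hq1]
  have hH : ∑ b : ↥J → BT, Real.negMulLog (∏ i : ↥J, pmfOf p (fun ω => B ω i.1) (b i))
      = ∑ i : ↥J, ∑ v, Real.negMulLog (pmfOf p (fun ω => B ω i.1) v) := by
    refine Eq.trans (Finset.sum_congr (by congr!) fun _ _ => rfl)
      (sum_negMulLog_prod (fun (i : ↥J) v => pmfOf p (fun ω => B ω i.1) v)
        (fun i => hq1 i.1))
  have step : ∀ (y : M) (b : ↥J → BT),
      Real.negMulLog (pmfOf p (fun ω => (Y0 ω, fun i : ↥J => B ω i)) (y, b))
        = (∏ i : ↥J, pmfOf p (fun ω => B ω i.1) (b i)) * Real.negMulLog (pmfOf p Y0 y)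
          + pmfOf p Y0 y
            * Real.negMulLog (∏ i : ↥J, pmfOf p (fun ω => B ω i.1) (b i)) := by
    intro y b
    rw [pmfOf_restrict hp1 hind J y b, Real.negMulLog_mul]
  calc Hent p (fun ω => (Y0 ω, fun i : ↥J => B ω i))
      = ∑ y, ∑ b : ↥J → BT,
          Real.negMulLog (pmfOf p (fun ω => (Y0 ω, fun i : ↥J => B ω i)) (y, b)) := by
        rw [Hent_eq_negMulLog, Fintype.sum_prod_type]
    _ = ∑ y, ∑ b : ↥J → BT,
          ((∏ i : ↥J, pmfOf p (fun ω => B ω i.1) (b i)) * Real.negMulLog (pmfOf p Y0 y)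
            + pmfOf p Y0 y
              * Real.negMulLog (∏ i : ↥J, pmfOf p (fun ω => B ω i.1) (b i))) :=
        Finset.sum_congr rfl fun y _ => Finset.sum_congr rfl fun b _ => step y b
    _ = (∑ y, Real.negMulLog (pmfOf p Y0 y))
        + ∑ i : ↥J, ∑ v, Real.negMulLog (pmfOf p (fun ω => B ω i.1) v) := by
        rw [Finset.sum_congr rfl fun y _ => Finset.sum_add_distrib, Finset.sum_add_distrib]
        congr 1
        · refine Finset.sum_congr rfl fun y _ => ?_
          rw [← Finset.sum_mul, hPsum, one_mul]
        · rw [Finset.sum_congr rfl fun y _ =>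
            (by rw [← Finset.mul_sum, hH] :
              (∑ b : ↥J → BT, pmfOf p Y0 y
                * Real.negMulLog (∏ i : ↥J, pmfOf p (fun ω => B ω i.1) (b i)))
              = pmfOf p Y0 y
                * ∑ i : ↥J, ∑ v, Real.negMulLog (pmfOf p (fun ω => B ω i.1) v))]
          rw [← Finset.sum_mul, hq0sum, one_mul]
    _ = Hent p Y0 + ∑ i : ↥J, Hent p (fun ω => B ω i.1) := by
        rw [Hent_eq_negMulLog p Y0]
        congr 1
        exact Finset.sum_congr rfl fun i _ => (Hent_eq_negMulLog p _).symm

end indepaux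

end aux

/-- If `B₁,…,B_m` are mutually independent and jointly independent of `Y₀`, and
`I₁,…,I_t ⊆ [m]` are subsets such that every element of `[m]` lies in exactly `s` of them,
then `∑ⱼ I(B_{Iⱼ}; Y ∣ Y₀) ≤ s · I(B_{[m]}; Y ∣ Y₀)`. -/
theorem sum_cmi_cover_le
    {Ω M T BT : Type*} [Fintype Ω] [Fintype M] [Fintype T] [Fintype BT] {m : ℕ}
    (p : Ω → ℝ) (hp0 : ∀ ω, 0 ≤ p ω) (hp1 : ∑ ω, p ω = 1)
    (Y0 : Ω → M) (Y : Ω → T) (B : Ω → Fin m → BT)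
    (hind : ∀ (y : M) (b : Fin m → BT),
      pmfOf p (fun ω => (Y0 ω, B ω)) (y, b)
        = pmfOf p Y0 y * ∏ i : Fin m, pmfOf p (fun ω => B ω i) (b i))
    (t s : ℕ) (I : Fin t → Finset (Fin m))
    (hcov : ∀ x : Fin m, (Finset.univ.filter (fun j => x ∈ I j)).card = s) :
    ∑ j : Fin t, CMI p (fun ω => fun i : ↥(I j) => B ω i) Y Y0
      ≤ (s : ℝ) * CMI p B Y Y0 := by
  classical
  -- abbreviations
  set z : ℝ := Hent p Y0 with hz
  set w : ℝ := Hent p (fun ω => (Y ω, Y0 ω)) with hw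
  set hE : Fin m → ℝ := fun i => Hent p (fun ω => B ω i) with hhE
  set f : Finset (Fin m) → ℝ :=
    fun J => Hent p (fun ω => ((fun i : ↥J => B ω (i : Fin m)), Y ω, Y0 ω)) with hf
  set P : ℕ → Finset (Fin m) := fun n => Finset.univ.filter (fun i => i.1 < n) with hP
  set d : Fin m → ℝ := fun i => f (P (i.1 + 1)) - f (P i.1) with hd
  -- helper for equality of restricted tuples
  have hfun : ∀ (J : Finset (Fin m)) (ω ω' : Ω),
      ((fun i : ↥J => B ω (i : Fin m)) = fun i : ↥J => B ω' (i : Fin m))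
        ↔ ∀ i ∈ J, B ω i = B ω' i := by
    intro J ω ω'
    rw [funext_iff]
    exact ⟨fun h i hi => h ⟨i, hi⟩, fun h i => h i.1 i.2⟩
  -- independence: entropy of (B_J, Y0)
  have hswap : ∀ J : Finset (Fin m),
      Hent p (fun ω => ((fun i : ↥J => B ω (i : Fin m)), Y0 ω))
        = z + ∑ i ∈ J, hE i := by
    intro J
    have h1 : Hent p (fun ω => ((fun i : ↥J => B ω (i : Fin m)), Y0 ω))
        = Hent p (fun ω => (Y0 ω, fun i : ↥J => B ω (i : Fin m))) :=
      Hent_congr fun ω ω' => by simp [Prod.ext_iff, and_comm]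
    rw [h1, Hent_indep hp1 hind J, hz]
    congr 1
    exact Finset.sum_coe_sort J (fun i => Hent p (fun ω => B ω i))
  -- submodularity for f
  have hsub : ∀ (K J' : Finset (Fin m)), J' ⊆ K → ∀ a, a ∉ K →
      f (insert a K) + f J' ≤ f K + f (insert a J') := by
    intro K J' hJK a haK
    have h := submod hp0 hp1 (fun ω => B ω a) (fun ω => fun i : ↥K => B ω (i : Fin m))
      (fun ω => ((fun i : ↥J' => B ω (i : Fin m)), Y ω, Y0 ω))
    have e1 : Hent p (fun ω => (B ω a, (fun i : ↥K => B ω (i : Fin m)),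
        ((fun i : ↥J' => B ω (i : Fin m)), Y ω, Y0 ω))) = f (insert a K) := by
      rw [hf]
      refine Hent_congr fun ω ω' => ?_
      simp only [Prod.ext_iff, hfun, Finset.mem_insert]
      constructor
      · rintro ⟨ha, hK, hJ, hy⟩
        exact ⟨fun i hi => hi.elim (fun h' => h' ▸ ha) (hK i), hy⟩
      · rintro ⟨hins, hy⟩
        exact ⟨hins a (Or.inl rfl), fun i hi => hins i (Or.inr hi),
          fun i hi => hins i (Or.inr (hJK hi)), hy⟩
    have e2 : Hent p (fun ω => (B ω a,
        ((fun i : ↥J' => B ω (i : Fin m)), Y ω, Y0 ω))) = f (insert a J') := by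
      rw [hf]
      refine Hent_congr fun ω ω' => ?_
      simp only [Prod.ext_iff, hfun, Finset.mem_insert]
      constructor
      · rintro ⟨ha, hJ, hy⟩
        exact ⟨fun i hi => hi.elim (fun h' => h' ▸ ha) (hJ i), hy⟩
      · rintro ⟨hins, hy⟩
        exact ⟨hins a (Or.inl rfl), fun i hi => hins i (Or.inr hi), hy⟩
    have e3 : Hent p (fun ω => ((fun i : ↥K => B ω (i : Fin m)),
        ((fun i : ↥J' => B ω (i : Fin m)), Y ω, Y0 ω))) = f K := by
      rw [hf]
      refine Hent_congr fun ω ω' => ?_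
      simp only [Prod.ext_iff, hfun]
      constructor
      · rintro ⟨hK, hJ, hy⟩
        exact ⟨hK, hy⟩
      · rintro ⟨hK, hy⟩
        exact ⟨hK, fun i hi => hK i (hJK hi), hy⟩
    rw [e1, e2, e3] at h
    have e4 : Hent p (fun ω => ((fun i : ↥J' => B ω (i : Fin m)), Y ω, Y0 ω)) = f J' := by
      rw [hf]
    rw [e4] at h
    linarith
  -- facts about P
  have hP0 : P 0 = ∅ := by
    rw [hP]
    ext j
    simp
  have hPm : P m = Finset.univ := by
    rw [hP]
    ext j
    simp [j.isLt]
  have hd_le : ∀ (a : Fin m) (J' : Finset (Fin m)), (∀ x ∈ J', x < a) →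
      d a ≤ f (insert a J') - f J' := by
    intro a J' hlt
    have hsubset : J' ⊆ P a.1 := by
      intro x hx
      rw [hP]
      simp only [Finset.mem_filter, Finset.mem_univ, true_and]
      exact hlt x hx
    have hnotmem : a ∉ P a.1 := by
      rw [hP]
      simp
    have hins : insert a (P a.1) = P (a.1 + 1) := by
      rw [hP]
      ext j
      simp only [Finset.mem_insert, Finset.mem_filter, Finset.mem_univ, true_and, Fin.ext_iff]
      omega
    have h := hsub (P a.1) J' hsubset a hnotmem
    rw [hins] at h
    show f (P (a.1 + 1)) - f (P a.1) ≤ f (insert a J') - f J'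
    linarith
  have hC1 : ∀ J : Finset (Fin m), f ∅ + ∑ i ∈ J, d i ≤ f J := by
    intro J
    induction J using Finset.induction_on_max with
    | empty => simp
    | insert a S hlt ih =>
      have haS : a ∉ S := fun h => absurd (hlt a h) (lt_irrefl a)
      rw [Finset.sum_insert haS]
      have h2 := hd_le a S hlt
      linarith
  have hC3 : f Finset.univ = f ∅ + ∑ i : Fin m, d i := by
    have ht : ∑ i : Fin m, d i = ∑ n ∈ Finset.range m, (f (P (n + 1)) - f (P n)) := by
      rw [hd]
      exact Fin.sum_univ_eq_sum_range (fun n => f (P (n + 1)) - f (P n)) m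
    rw [ht, Finset.sum_range_sub (fun n => f (P n)), hPm, hP0]
    ring
  have hw_empty : f ∅ = w := by
    rw [hf, hw]
    refine Hent_congr fun ω ω' => ?_
    simp [Prod.ext_iff, hfun]
  -- per-j identity
  have hj : ∀ j : Fin t, CMI p (fun ω => fun i : ↥(I j) => B ω i) Y Y0
      = (∑ i ∈ I j, hE i) + w - f (I j) := by
    intro j
    show Hent p (fun ω => ((fun i : ↥(I j) => B ω (i : Fin m)), Y0 ω))
        + Hent p (fun ω => (Y ω, Y0 ω))
        - Hent p (fun ω => ((fun i : ↥(I j) => B ω (i : Fin m)), Y ω, Y0 ω))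
        - Hent p Y0 = _
    rw [hswap (I j)]
    have hfid : Hent p (fun ω => ((fun i : ↥(I j) => B ω (i : Fin m)), Y ω, Y0 ω))
        = f (I j) := rfl
    rw [hfid]
    ring
  -- per-j inequality
  have hjle : ∀ j : Fin t, CMI p (fun ω => fun i : ↥(I j) => B ω i) Y Y0
      ≤ ∑ i ∈ I j, (hE i - d i) := by
    intro j
    have hsplit : ∑ i ∈ I j, (hE i - d i) = (∑ i ∈ I j, hE i) - ∑ i ∈ I j, d i :=
      Finset.sum_sub_distrib _ _
    rw [hj j, hsplit]
    linarith [hC1 (I j), hw_empty]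
  -- the full CMI
  have hfull : CMI p B Y Y0 = ∑ i : Fin m, (hE i - d i) := by
    have hBuniv : Hent p (fun ω => (B ω, Y0 ω))
        = Hent p (fun ω => ((fun i : ↥(Finset.univ : Finset (Fin m)) => B ω (i : Fin m)),
            Y0 ω)) := by
      refine Hent_congr fun ω ω' => ?_
      simp [Prod.ext_iff, hfun, funext_iff, Subtype.forall]
    have htriple : Hent p (fun ω => (B ω, Y ω, Y0 ω)) = f Finset.univ := by
      rw [hf]
      refine Hent_congr fun ω ω' => ?_
      simp [Prod.ext_iff, hfun, funext_iff, Subtype.forall]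
    show Hent p (fun ω => (B ω, Y0 ω)) + Hent p (fun ω => (Y ω, Y0 ω))
        - Hent p (fun ω => (B ω, Y ω, Y0 ω)) - Hent p Y0 = _
    have hsplit : ∑ i : Fin m, (hE i - d i) = (∑ i : Fin m, hE i) - ∑ i : Fin m, d i :=
      Finset.sum_sub_distrib _ _
    rw [hBuniv, hswap Finset.univ, htriple, hC3, hw_empty, hsplit]
    ring
  -- double counting
  have hdc : ∑ j : Fin t, ∑ i ∈ I j, (hE i - d i)
      = (s : ℝ) * ∑ i : Fin m, (hE i - d i) := by
    have h1 : ∀ j, ∑ i ∈ I j, (hE i - d i)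
        = ∑ i : Fin m, if i ∈ I j then hE i - d i else 0 := by
      intro j
      rw [Finset.sum_ite_mem, Finset.univ_inter]
    rw [Finset.sum_congr rfl fun j _ => h1 j, Finset.sum_comm]
    rw [Finset.sum_congr rfl fun i _ =>
      (by rw [← Finset.sum_filter, Finset.sum_const, hcov i, nsmul_eq_mul] :
        (∑ j : Fin t, if i ∈ I j then hE i - d i else 0) = (s : ℝ) * (hE i - d i))]
    rw [← Finset.mul_sum]
  rw [hfull, ← hdc]
  exact Finset.sum_le_sum fun j _ => hjle j
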